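/- Let K > 0. For every η > 0 there exists δ > 0 (depending only on η, K and d) such that every measurable function f: Ω → [0,∞) satisfying ∫_Ω f · |ln(d f)| ≤ K fulfills ∫_E f ≤ η for every measurable set E ⊆ Ω with |E| ≤ δ. -/

import Mathlib

open MeasureTheory Set ENNReal

/-- Uniform equi-integrability from an entropy bound (cf. Lemma `lem826`):
if `∫_Ω f |ln(d f)| ≤ K` then the integrals of `f` over small sets are uniformly small.
The integrand `f·|ln(d f)|` is interpreted as `0` where `f = 0` and as `+∞` where
`f > 0` and `d·f = 0`. -/
theorem stmt_16
    (a b : ℝ) (hab : a < b)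
    (d : ℝ → ℝ) (hd_meas : Measurable d)
    (hd_nonneg : ∀ x ∈ Set.Ioo a b, 0 ≤ d x)
    (hd_int : (∫⁻ x in Set.Ioo a b, (ENNReal.ofReal (d x))⁻¹) < ⊤)
    (K : ℝ) (hK : 0 < K) :
    ∀ η > (0:ℝ), ∃ δ > (0:ℝ), ∀ f : ℝ → ℝ, Measurable f →
      (∀ x ∈ Set.Ioo a b, 0 ≤ f x) →
      (∫⁻ x in Set.Ioo a b,
          (if f x = 0 then 0
           else if d x * f x = 0 then ⊤
           else ENNReal.ofReal (f x * |Real.log (d x * f x)|)) : ℝ≥0∞) ≤ ENNReal.ofReal K →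
      ∀ E : Set ℝ, MeasurableSet E → E ⊆ Set.Ioo a b → volume E ≤ ENNReal.ofReal δ →
        (∫⁻ x in E, ENNReal.ofReal (f x)) ≤ ENNReal.ofReal η := by
  intro η hη
  -- choose M with log M = 2K/η
  set M : ℝ := Real.exp (2 * K / η) with hMdef
  have hM : 0 < M := Real.exp_pos _
  have hlogM : Real.log M = 2 * K / η := Real.log_exp _
  have hlogMpos : 0 < Real.log M := by
    rw [hlogM]; positivity
  set c : ℝ≥0∞ := ENNReal.ofReal (Real.log M) with hcdef
  have hc0 : c ≠ 0 := by
    simp [hcdef, ENNReal.ofReal_eq_zero, not_le, hlogMpos]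
  have hctop : c ≠ ⊤ := ENNReal.ofReal_ne_top
  set μ : Measure ℝ := volume.restrict (Set.Ioo a b) with hμdef
  set g : ℝ → ℝ≥0∞ := fun x => (ENNReal.ofReal (d x))⁻¹ with hgdef
  have hgmeas : Measurable g := (ENNReal.measurable_ofReal.comp hd_meas).inv
  have hgint : (∫⁻ x, g x ∂μ) ≠ ⊤ := hd_int.ne
  have hε0 : ENNReal.ofReal (η / 2) / ENNReal.ofReal M ≠ 0 := by
    rw [ENNReal.div_ne_zero]
    constructor
    · simp [ENNReal.ofReal_eq_zero, not_le]; linarith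
    · exact ENNReal.ofReal_ne_top
  obtain ⟨δ₀, hδ₀pos, hδ₀⟩ := exists_pos_setLIntegral_lt_of_measure_lt hgint hε0
  set δ : ℝ := (min δ₀ 1).toReal / 2 with hδdef
  have hminpos : 0 < min δ₀ 1 := lt_min hδ₀pos zero_lt_one
  have hmintop : min δ₀ 1 ≠ ⊤ := by
    exact ne_top_of_le_ne_top one_ne_top (min_le_right _ _)
  have hδpos : 0 < δ := by
    rw [hδdef]
    have := ENNReal.toReal_pos hminpos.ne' hmintop
    linarith
  refine ⟨δ, hδpos, ?_⟩
  intro f hf_meas hf_nonneg hf_ent E hE hEsub hEvol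
  have hδlt : ENNReal.ofReal δ < δ₀ := by
    calc ENNReal.ofReal δ < ENNReal.ofReal ((min δ₀ 1).toReal) := by
          rw [ENNReal.ofReal_lt_ofReal_iff (ENNReal.toReal_pos hminpos.ne' hmintop)]
          rw [hδdef]
          have := ENNReal.toReal_pos hminpos.ne' hmintop
          linarith
      _ = min δ₀ 1 := ENNReal.ofReal_toReal hmintop
      _ ≤ δ₀ := min_le_left _ _
  have hμE : μ E < δ₀ := by
    rw [hμdef, Measure.restrict_apply hE,
      Set.inter_eq_self_of_subset_left hEsub]
    exact lt_of_le_of_lt hEvol hδlt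
  have hrestr : volume.restrict E = μ.restrict E := by
    rw [hμdef, Measure.restrict_restrict hE,
      Set.inter_eq_self_of_subset_left hEsub]
  set F : ℝ → ℝ≥0∞ := fun x =>
    (if f x = 0 then 0
     else if d x * f x = 0 then ⊤
     else ENNReal.ofReal (f x * |Real.log (d x * f x)|)) with hFdef
  -- pointwise bound on E
  have hpt : ∀ x ∈ E, ENNReal.ofReal (f x) ≤ ENNReal.ofReal M * g x + F x / c := by
    intro x hxE
    have hx : x ∈ Set.Ioo a b := hEsub hxE
    have hd0 : 0 ≤ d x := hd_nonneg x hx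
    have hf0 : 0 ≤ f x := hf_nonneg x hx
    rcases eq_or_lt_of_le hf0 with hfz | hfpos
    · simp [hFdef, ← hfz]
    by_cases hdf : d x * f x = 0
    · have hFtop : F x = ⊤ := by
        rw [hFdef]
        simp only [if_neg hfpos.ne', if_pos hdf]
      have : F x / c = ⊤ := by
        rw [hFtop, ENNReal.top_div, if_neg hctop]
      rw [this]
      simp
    · have hdpos : 0 < d x := by
        rcases eq_or_lt_of_le hd0 with h | h
        · exact absurd (by rw [← h]; ring) hdf
        · exact h
      have hdfpos : 0 < d x * f x := mul_pos hdpos hfpos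
      have hFx : F x = ENNReal.ofReal (f x * |Real.log (d x * f x)|) := by
        rw [hFdef]
        simp only [if_neg hfpos.ne', if_neg hdf]
      by_cases hle : d x * f x ≤ M
      · -- f x ≤ M / d x
        have h1 : f x ≤ M * (d x)⁻¹ := by
          rw [le_mul_inv_iff₀ hdpos, mul_comm]
          exact hle
        calc ENNReal.ofReal (f x) ≤ ENNReal.ofReal (M * (d x)⁻¹) :=
              ENNReal.ofReal_le_ofReal h1
          _ = ENNReal.ofReal M * (ENNReal.ofReal (d x))⁻¹ := by
              rw [ENNReal.ofReal_mul hM.le, ENNReal.ofReal_inv_of_pos hdpos]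
          _ ≤ ENNReal.ofReal M * g x + F x / c := le_self_add
      · -- d x * f x > M, use entropy
        push_neg at hle
        have hlog : Real.log M ≤ |Real.log (d x * f x)| := by
          have h1 : Real.log M ≤ Real.log (d x * f x) :=
            Real.log_le_log hM hle.le
          exact h1.trans (le_abs_self _)
        have h2 : ENNReal.ofReal (f x) ≤ F x / c := by
          rw [ENNReal.le_div_iff_mul_le (Or.inl hc0) (Or.inl hctop), hFx, hcdef,
            ← ENNReal.ofReal_mul hf0]
          exact ENNReal.ofReal_le_ofReal (by
            apply mul_le_mul_of_nonneg_left hlog hf0)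
        calc ENNReal.ofReal (f x) ≤ F x / c := h2
          _ ≤ ENNReal.ofReal M * g x + F x / c := le_add_self
  -- integrate
  have hEineq : (∫⁻ x in E, ENNReal.ofReal (f x)) ≤
      (∫⁻ x in E, (ENNReal.ofReal M * g x + F x / c) ∂μ) := by
    rw [hrestr]
    refine lintegral_mono_ae ?_
    exact (ae_restrict_iff' hE).2 (Filter.Eventually.of_forall hpt)
  have hsplit : (∫⁻ x in E, (ENNReal.ofReal M * g x + F x / c) ∂μ) =
      (∫⁻ x in E, ENNReal.ofReal M * g x ∂μ) + (∫⁻ x in E, F x / c ∂μ) := by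
    apply lintegral_add_left
    exact hgmeas.const_mul _
  have h1 : (∫⁻ x in E, ENNReal.ofReal M * g x ∂μ) ≤ ENNReal.ofReal (η / 2) := by
    rw [lintegral_const_mul _ hgmeas]
    have := (hδ₀ E hμE).le
    calc ENNReal.ofReal M * ∫⁻ x in E, g x ∂μ
        ≤ ENNReal.ofReal M * (ENNReal.ofReal (η / 2) / ENNReal.ofReal M) := by
          gcongr
      _ ≤ ENNReal.ofReal (η / 2) := ENNReal.mul_div_le
  have h2 : (∫⁻ x in E, F x / c ∂μ) ≤ ENNReal.ofReal (η / 2) := by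
    have heq : (∫⁻ x in E, F x / c ∂μ) = (∫⁻ x in E, F x ∂μ) / c := by
      simp only [div_eq_mul_inv]
      rw [mul_comm ((∫⁻ x in E, F x ∂μ)) c⁻¹]
      rw [← lintegral_const_mul' c⁻¹ _ (by simp [hc0])]
      simp [mul_comm]
    rw [heq]
    have hFle : (∫⁻ x in E, F x ∂μ) ≤ ENNReal.ofReal K := by
      refine le_trans ?_ hf_ent
      rw [← hrestr]
      exact lintegral_mono' (Measure.restrict_mono hEsub le_rfl) le_rfl
    calc (∫⁻ x in E, F x ∂μ) / c ≤ ENNReal.ofReal K / c := by gcongr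
      _ = ENNReal.ofReal (K / Real.log M) := by
          rw [hcdef, ← ENNReal.ofReal_div_of_pos hlogMpos]
      _ = ENNReal.ofReal (η / 2) := by
          rw [hlogM]
          congr 1
          field_simp
  calc (∫⁻ x in E, ENNReal.ofReal (f x)) ≤
      (∫⁻ x in E, ENNReal.ofReal M * g x ∂μ) + (∫⁻ x in E, F x / c ∂μ) := by
        rw [← hsplit]; exact hEineq
    _ ≤ ENNReal.ofReal (η / 2) + ENNReal.ofReal (η / 2) := add_le_add h1 h2
    _ = ENNReal.ofReal η := by
        rw [← ENNReal.ofReal_add (by linarith) (by linarith)]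
        norm_num
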